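/- Let g : ℝⁿ → ℝⁿ be η-quasisymmetric with g(0) = 0, and let u, v : B(0, r₀) → ℝⁿ satisfy u(x) → 0 and v(x) → 0 as x → 0 and u ∼ v as x → 0. Then g ∘ u ∼ g ∘ v as x → 0, i.e. for every ε > 0 there is δ > 0 such that |g(u(x)) − g(v(x))| ≤ ε(|g(u(x))| + |g(v(x))|) whenever |x| < δ. -/

import Mathlib

open Filter Topology Set

/-- Post-composition half of Lemma 3.1: if `g : ℝⁿ → ℝⁿ` is `η`-quasisymmetric with
`g(0) = 0` (where `η` is an increasing homeomorphism of `[0,∞)` onto itself), and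
`u, v : B(0, r₀) → ℝⁿ` satisfy `u(x) → 0`, `v(x) → 0` and `u ∼ v` as `x → 0`, then
`g ∘ u ∼ g ∘ v` as `x → 0`. -/
theorem qs_comp_left_sim {n : ℕ} (r₀ : ℝ) (hr₀ : 0 < r₀)
    (η : ℝ → ℝ)
    (hη_mono : StrictMonoOn η (Set.Ici 0))
    (hη_cont : ContinuousOn η (Set.Ici 0))
    (hη_bij : Set.BijOn η (Set.Ici 0) (Set.Ici 0))
    (g u v : EuclideanSpace ℝ (Fin n) → EuclideanSpace ℝ (Fin n))
    (hg0 : g 0 = 0)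
    (hqs : ∀ x y z : EuclideanSpace ℝ (Fin n), x ≠ z →
      ‖g x - g y‖ ≤ η (‖x - y‖ / ‖x - z‖) * ‖g x - g z‖)
    (hu0 : Filter.Tendsto u (nhdsWithin 0 (Metric.ball (0 : EuclideanSpace ℝ (Fin n)) r₀)) (nhds 0))
    (hv0 : Filter.Tendsto v (nhdsWithin 0 (Metric.ball (0 : EuclideanSpace ℝ (Fin n)) r₀)) (nhds 0))
    (huv : ∀ ε > (0 : ℝ), ∃ δ > (0 : ℝ), ∀ x : EuclideanSpace ℝ (Fin n),
      ‖x‖ < r₀ → ‖x‖ < δ → ‖u x - v x‖ ≤ ε * (‖u x‖ + ‖v x‖)) :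
    ∀ ε > (0 : ℝ), ∃ δ > (0 : ℝ), ∀ x : EuclideanSpace ℝ (Fin n),
      ‖x‖ < r₀ → ‖x‖ < δ → ‖g (u x) - g (v x)‖ ≤ ε * (‖g (u x)‖ + ‖g (v x)‖) := by
  intro ε hε
  -- η 0 = 0
  have hη0 : η 0 = 0 := by
    obtain ⟨s, hs, hηs⟩ := hη_bij.surjOn (Set.mem_Ici.mpr le_rfl)
    rcases eq_or_lt_of_le (Set.mem_Ici.mp hs : (0:ℝ) ≤ s) with h | h
    · rw [← h] at hηs; exact hηs
    · have := hη_mono (le_refl (0:ℝ)) hs h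
      have h0 : (0:ℝ) ≤ η 0 := hη_bij.mapsTo (Set.mem_Ici.mpr le_rfl)
      linarith [hηs ▸ this]
  have hη1 : 0 < η 1 := by
    have := hη_mono (le_refl (0:ℝ)) (by norm_num : (1:ℝ) ∈ Set.Ici 0) one_pos
    linarith [hη0 ▸ this]
  set m := min ε (η 1) with hm
  have hmpos : 0 < m := lt_min hε hη1
  obtain ⟨t, ht0, hηt⟩ := hη_bij.surjOn (show m ∈ Set.Ici 0 from le_of_lt hmpos)
  have htpos : 0 < t := by
    rcases eq_or_lt_of_le (Set.mem_Ici.mp ht0 : (0:ℝ) ≤ t) with h | h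
    · exfalso; rw [← h, hη0] at hηt; linarith
    · exact h
  set ε' := min (t / 2) (1 / 2) with hε'
  have hε'pos : 0 < ε' := lt_min (by linarith) (by norm_num)
  have hε'lt1 : ε' < 1 := lt_of_le_of_lt (min_le_right _ _) (by norm_num)
  obtain ⟨δ, hδpos, hδ⟩ := huv ε' hε'pos
  refine ⟨δ, hδpos, fun x hxr hxδ => ?_⟩
  have huvx := hδ x hxr hxδ
  set a := u x
  set b := v x
  -- if one of a, b is zero, so is the other
  have hzero : a = 0 ∧ b = 0 ∨ (a ≠ 0 ∧ b ≠ 0) := by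
    by_cases ha : a = 0
    · left
      refine ⟨ha, ?_⟩
      rw [ha] at huvx
      simp only [zero_sub, norm_neg, norm_zero, zero_add] at huvx
      have hb0 : ‖b‖ ≤ 0 := by nlinarith [norm_nonneg b, hε'lt1]
      exact norm_le_zero_iff.mp hb0
    · by_cases hb : b = 0
      · exfalso
        rw [hb] at huvx
        simp only [sub_zero, norm_zero, add_zero] at huvx
        have := norm_pos_iff.mpr ha
        nlinarith
      · right; exact ⟨ha, hb⟩
  rcases hzero with ⟨ha, hb⟩ | ⟨ha, hb⟩
  · rw [ha, hb, hg0]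
    simp only [sub_self, norm_zero, add_zero, mul_zero, le_refl]
  -- key lemma: if ‖q‖ ≤ ‖p‖, p ≠ 0, then ‖g p - g q‖ ≤ ε * (‖g p‖ + ‖g q‖)
  have key : ∀ p q : EuclideanSpace ℝ (Fin n), p ≠ 0 → ‖q‖ ≤ ‖p‖ →
      ‖p - q‖ ≤ ε' * (‖p‖ + ‖q‖) → ‖g p - g q‖ ≤ ε * (‖g p‖ + ‖g q‖) := by
    intro p q hp hqp hpq
    have hpn : 0 < ‖p‖ := norm_pos_iff.mpr hp
    have h1 := hqs p q 0 hp
    rw [sub_zero, hg0, sub_zero] at h1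
    have hratio : ‖p - q‖ / ‖p‖ ≤ t := by
      rw [div_le_iff₀ hpn]
      have h2 : ε' * (‖p‖ + ‖q‖) ≤ ε' * (2 * ‖p‖) := by nlinarith
      have h3 : ε' ≤ t / 2 := min_le_left _ _
      nlinarith
    have hratio0 : 0 ≤ ‖p - q‖ / ‖p‖ := div_nonneg (norm_nonneg _) (norm_nonneg _)
    have hηle : η (‖p - q‖ / ‖p‖) ≤ m := by
      rw [← hηt]
      exact hη_mono.monotoneOn hratio0 ht0 hratio
    have hmε : m ≤ ε := min_le_left _ _
    calc ‖g p - g q‖ ≤ η (‖p - q‖ / ‖p‖) * ‖g p‖ := h1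
      _ ≤ ε * ‖g p‖ := by
          apply mul_le_mul_of_nonneg_right (le_trans hηle hmε) (norm_nonneg _)
      _ ≤ ε * (‖g p‖ + ‖g q‖) := by nlinarith [norm_nonneg (g q)]
  rcases le_total ‖b‖ ‖a‖ with h | h
  · exact key a b ha h huvx
  · have := key b a hb h (by rw [norm_sub_rev]; linarith [huvx])
    rw [norm_sub_rev] at this
    linarith
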